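/- Let A be a symmetric positive definite matrix, f(x) = (1/2)xᵀAx + bᵀx, and suppose two steepest descent steps with exact line search are taken from x_{k-2}, producing gradients g_{k-2}, g_{k-1}, g_k, all nonzero. Then g_kᵀg_{k-2} > 0. -/

import Mathlib

open Matrix

/-- After two exact-line-search steepest descent steps on a strongly convex
quadratic, with all three gradients nonzero, g_kᵀ g_{k-2} > 0. -/
theorem sd_two_steps_gradient_inner_pos {n : ℕ}
    (A : Matrix (Fin n) (Fin n) ℝ) (hA : A.PosDef) (b : Fin n → ℝ)
    (x0 x1 x2 g0 g1 g2 : Fin n → ℝ) (α0 α1 : ℝ)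
    (hg0 : g0 = A *ᵥ x0 + b) (hg1 : g1 = A *ᵥ x1 + b) (hg2 : g2 = A *ᵥ x2 + b)
    (hα0 : α0 = (g0 ⬝ᵥ g0) / (g0 ⬝ᵥ (A *ᵥ g0)))
    (hα1 : α1 = (g1 ⬝ᵥ g1) / (g1 ⬝ᵥ (A *ᵥ g1)))
    (hx1 : x1 = x0 - α0 • g0) (hx2 : x2 = x1 - α1 • g1)
    (h0 : g0 ≠ 0) (h1 : g1 ≠ 0) (h2 : g2 ≠ 0) :
    0 < g2 ⬝ᵥ g0 := by
  have hAg0 : 0 < g0 ⬝ᵥ (A *ᵥ g0) := by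
    have := hA.dotProduct_mulVec_pos h0
    simpa using this
  have hAg1 : 0 < g1 ⬝ᵥ (A *ᵥ g1) := by
    have := hA.dotProduct_mulVec_pos h1
    simpa using this
  have hself : ∀ g : Fin n → ℝ, g ≠ 0 → 0 < g ⬝ᵥ g := by
    intro g hg
    have hnn : 0 ≤ g ⬝ᵥ g := Finset.sum_nonneg fun i _ => mul_self_nonneg _
    rcases eq_or_lt_of_le hnn with h | h
    · exact absurd (dotProduct_self_eq_zero.mp h.symm) hg
    · exact h
  have hg0g0 : 0 < g0 ⬝ᵥ g0 := hself g0 h0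
  have hg1g1 : 0 < g1 ⬝ᵥ g1 := hself g1 h1
  have hα0pos : 0 < α0 := by rw [hα0]; positivity
  have hα1pos : 0 < α1 := by rw [hα1]; positivity
  -- recurrences for gradients
  have hg1e : g1 = g0 - α0 • (A *ᵥ g0) := by
    rw [hg1, hx1, Matrix.mulVec_sub, Matrix.mulVec_smul, hg0]
    abel
  have hg2e : g2 = g1 - α1 • (A *ᵥ g1) := by
    rw [hg2, hx2, Matrix.mulVec_sub, Matrix.mulVec_smul, hg1]
    abel
  -- orthogonality g1 ⬝ g0 = 0
  have hcomm : (A *ᵥ g0) ⬝ᵥ g0 = g0 ⬝ᵥ (A *ᵥ g0) := dotProduct_comm _ _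
  have horth : g1 ⬝ᵥ g0 = 0 := by
    rw [hg1e, sub_dotProduct, smul_dotProduct, hcomm, hα0]
    rw [smul_eq_mul, div_mul_cancel₀ _ hAg0.ne', sub_self]
  -- A *ᵥ g0 in terms of g0, g1
  have hAg0e : A *ᵥ g0 = α0⁻¹ • (g0 - g1) := by
    rw [hg1e, sub_sub_cancel, smul_smul, inv_mul_cancel₀ hα0pos.ne', one_smul]
  -- symmetry: (A *ᵥ g1) ⬝ᵥ g0 = g1 ⬝ᵥ (A *ᵥ g0)
  have hsym : (A *ᵥ g1) ⬝ᵥ g0 = g1 ⬝ᵥ (A *ᵥ g0) := by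
    rw [dotProduct_comm, Matrix.dotProduct_mulVec, ← Matrix.mulVec_transpose]
    have hAT : Aᵀ = A := by simpa using hA.1.eq
    rw [hAT, dotProduct_comm]
  have key : g2 ⬝ᵥ g0 = α1 * α0⁻¹ * (g1 ⬝ᵥ g1) := by
    rw [hg2e, sub_dotProduct, smul_dotProduct, horth, hsym, hAg0e,
      dotProduct_smul, dotProduct_sub, horth]
    simp [smul_eq_mul]
    ring
  rw [key]
  positivity
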